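/- Let k, n, m, ℓ be positive integers and let ζ_k = e^{2πi/k}. Let H ∈ BH(n,k) and M ∈ BH(m,ℓ), and let X, Y be subsets of the group ⟨ζ_k⟩ of k-th roots of unity such that every entry of H lies in X and every eigenvalue of m^{-1/2}·M lies in Y. Suppose the pair (H,M) is (X,Y)-sound, i.e.: (1) for every j with ζ_k^j ∈ X, the matrix m^{(1-j)/2}·M^j belongs to BH(m,ℓ); and (2) for every j with ζ_k^j ∈ Y, the entrywise j-th power H^{(j)} belongs to BH(n,k). Choose a function e on the index pairs with H_{ab} = ζ_k^{e(a,b)} for all a,b. Then the mn × mn block matrix H^φ whose (a,b) block is φ(H_{ab}) = m^{(1-e(a,b))/2}·M^{e(a,b)} belongs to BH(mn, ℓ). -/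

import Mathlib

open Complex

/-- A Butson Hadamard matrix with entries in the `k`-th roots of unity:
every entry is a `k`-th root of unity and `H * Hᴴ = n • 1` where `n` is the order. -/
def IsButson {ι : Type*} [Fintype ι] [DecidableEq ι] (k : ℕ) (H : Matrix ι ι ℂ) : Prop :=
  (∀ i j, H i j ^ k = 1) ∧ H * H.conjTranspose = (Fintype.card ι : ℂ) • 1

open scoped Matrix.Norms.L2Operator
open Matrix

noncomputable instance matCStar {m : ℕ} : CStarAlgebra (Matrix (Fin m) (Fin m) ℂ) := Matrix.instCStarAlgebra

lemma aux_normal_spec_zero {m : ℕ} (A : Matrix (Fin m) (Fin m) ℂ)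
    (hA : Commute A (star A)) (h : spectrum ℂ A ⊆ {0}) : A = 0 := by
  haveI : IsStarNormal A := ⟨hA.symm⟩
  have h1 : spectralRadius ℂ A = 0 := by
    refine le_antisymm ?_ zero_le
    refine iSup₂_le fun z hz => ?_
    have : z = 0 := h hz
    simp [this]
  have h2 := IsStarNormal.spectralRadius_eq_nnnorm A
  rw [h1] at h2
  have : ‖A‖₊ = 0 := by exact_mod_cast h2.symm
  simpa using this

lemma aux_conj {k : ℕ} (hk : 0 < k) (z : ℂ) (hz : z ^ k = 1) :
    (starRingEnd ℂ) z = z⁻¹ := by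
  have habs : ‖z‖ = 1 := by
    have h1 : ‖z‖ ^ k = 1 := by rw [← norm_pow, hz]; simp
    rcases pow_eq_one_iff_cases.mp h1 with h | h | h
    · omega
    · exact h
    · exfalso; nlinarith [norm_nonneg z, h.1]
  have hmul : z * (starRingEnd ℂ) z = 1 := by
    rw [Complex.mul_conj, Complex.normSq_eq_norm_sq, habs]; norm_num
  exact ((inv_eq_of_mul_eq_one_right hmul).symm)

lemma aux_key {n m k : ℕ} (hm : 0 < m) (hk : 0 < k)
    (U : Matrix (Fin m) (Fin m) ℂ) (hUU : U * Uᴴ = 1) (hUU' : Uᴴ * U = 1)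
    (ζ : ℂ) (hζk : ζ ^ k = 1)
    (e : Fin n → Fin n → ℕ)
    (a b : Fin n)
    (hspec : ∀ z ∈ spectrum ℂ U, ∃ j : ℕ,
      z = ζ ^ j ∧ ∑ c : Fin n, (ζ ^ e a c) ^ j * (starRingEnd ℂ) ((ζ ^ e b c) ^ j) = 0) :
    ∑ c : Fin n, U ^ (e a c) * Uᴴ ^ (e b c) = 0 := by
  haveI : Nonempty (Fin m) := ⟨⟨0, hm⟩⟩
  have hζ0 : ζ ≠ 0 := fun h => by simp [h, zero_pow hk.ne'] at hζk
  have hpow1 : ∀ j : ℕ, Uᴴ ^ j * U ^ j = 1 := by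
    intro j; induction j with
    | zero => simp
    | succ j ih =>
      rw [pow_succ', pow_succ, mul_assoc, ← mul_assoc (Uᴴ ^ j), ih, one_mul, hUU']
  have hpow2 : ∀ j : ℕ, U ^ j * Uᴴ ^ j = 1 := by
    intro j; induction j with
    | zero => simp
    | succ j ih =>
      rw [pow_succ', pow_succ, mul_assoc, ← mul_assoc (U ^ j), ih, one_mul, hUU]
  set K : ℕ := Finset.univ.sup (e b) with hK
  have hle : ∀ c : Fin n, e b c ≤ K := fun c => Finset.le_sup (Finset.mem_univ c)
  have haeval : Polynomial.aeval U (∑ c : Fin n, (Polynomial.X : Polynomial ℂ) ^ (e a c + (K - e b c))) =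
      ∑ c : Fin n, U ^ (e a c + (K - e b c)) := by
    rw [map_sum]
    exact Finset.sum_congr rfl fun c _ => by rw [Polynomial.aeval_X_pow]
  have hcU : Commute U Uᴴ := hUU.trans hUU'.symm
  have hspecN : spectrum ℂ (∑ c : Fin n, U ^ (e a c + (K - e b c))) ⊆ {0} := by
    rw [← haeval, spectrum.map_polynomial_aeval_of_nonempty U _ (spectrum.nonempty U)]
    rintro x ⟨z, hz, rfl⟩
    obtain ⟨j, rfl, hsum⟩ := hspec z hz
    have hz0 : (ζ : ℂ) ^ j ≠ 0 := pow_ne_zero _ hζ0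
    simp only [Set.mem_singleton_iff]
    have heval : Polynomial.eval (ζ ^ j) (∑ c : Fin n,
          (Polynomial.X : Polynomial ℂ) ^ (e a c + (K - e b c))) =
        (ζ ^ j) ^ K * ∑ c : Fin n,
          (ζ ^ e a c) ^ j * (starRingEnd ℂ) ((ζ ^ e b c) ^ j) := by
      rw [Polynomial.eval_finset_sum, Finset.mul_sum]
      refine Finset.sum_congr rfl fun c _ => ?_
      rw [Polynomial.eval_pow, Polynomial.eval_X]
      have hb1 : ((ζ ^ e b c) ^ j) ^ k = 1 := by
        have h2 : ((ζ ^ e b c) ^ j) ^ k = ((ζ ^ k) ^ e b c) ^ j := by ring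
        rw [h2, hζk, one_pow, one_pow]
      have hc1 : (starRingEnd ℂ) ((ζ ^ e b c) ^ j) = ((ζ ^ j) ^ e b c)⁻¹ := by
        rw [aux_conj hk _ hb1]
        congr 1; ring
      have hc2 : (ζ ^ e a c) ^ j = (ζ ^ j) ^ e a c := by ring
      rw [hc1, hc2, pow_add, pow_sub₀ _ hz0 (hle c)]
      ring
    rw [heval, hsum, mul_zero]
  have hcomm : Commute (∑ c : Fin n, U ^ (e a c + (K - e b c)))
      (star (∑ c : Fin n, U ^ (e a c + (K - e b c)))) := by
    have hstar : star (∑ c : Fin n, U ^ (e a c + (K - e b c))) =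
        ∑ c : Fin n, Uᴴ ^ (e a c + (K - e b c)) := by
      rw [star_sum]
      exact Finset.sum_congr rfl fun c _ => by
        rw [star_pow, Matrix.star_eq_conjTranspose]
    rw [hstar]
    refine Commute.sum_left _ _ _ fun c _ => ?_
    exact Commute.sum_right _ _ _ fun c' _ => hcU.pow_pow _ _
  have hN'0 : (∑ c : Fin n, U ^ (e a c + (K - e b c))) = 0 :=
    aux_normal_spec_zero _ hcomm hspecN
  have hNU : (∑ c : Fin n, U ^ e a c * Uᴴ ^ e b c) * U ^ K =
      ∑ c : Fin n, U ^ (e a c + (K - e b c)) := by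
    rw [Finset.sum_mul]
    refine Finset.sum_congr rfl fun c _ => ?_
    have h1 : U ^ K = U ^ e b c * U ^ (K - e b c) := by
      rw [← pow_add, Nat.add_sub_cancel' (hle c)]
    rw [mul_assoc, h1, ← mul_assoc (Uᴴ ^ e b c), hpow1, one_mul, ← pow_add]
  have hfin : (∑ c : Fin n, U ^ e a c * Uᴴ ^ e b c) =
      ((∑ c : Fin n, U ^ e a c * Uᴴ ^ e b c) * U ^ K) * Uᴴ ^ K := by
    rw [mul_assoc, hpow2, mul_one]
  rw [hfin, hNU, hN'0, zero_mul]

lemma aux_pow_mul {m : ℕ} (U : Matrix (Fin m) (Fin m) ℂ) (hUU : U * Uᴴ = 1)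
    (hUU' : Uᴴ * U = 1) (j : ℕ) : U ^ j * Uᴴ ^ j = 1 := by
  induction j with
  | zero => simp
  | succ j ih =>
    rw [pow_succ', pow_succ, mul_assoc, ← mul_assoc (U ^ j), ih, one_mul, hUU]

theorem stmt_0 (n m k l : ℕ) (hn : 0 < n) (hm : 0 < m) (hk : 0 < k) (hl : 0 < l)
    (ζ : ℂ) (hζ : ζ = Complex.exp (2 * Real.pi * Complex.I / k))
    (X Y : Set ℂ)
    (hX : X ⊆ {z : ℂ | ∃ j : ℕ, z = ζ ^ j})
    (hY : Y ⊆ {z : ℂ | ∃ j : ℕ, z = ζ ^ j})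
    (H : Matrix (Fin n) (Fin n) ℂ) (M : Matrix (Fin m) (Fin m) ℂ)
    (hH : IsButson k H) (hM : IsButson l M)
    -- every entry of `H` lies in `X`
    (hHX : ∀ a b, H a b ∈ X)
    -- every eigenvalue of `m^{-1/2} • M` lies in `Y`
    (hMY : spectrum ℂ (((Real.sqrt m : ℂ))⁻¹ • M) ⊆ Y)
    -- soundness condition (1): for `ζ^j ∈ X`, `m^{(1-j)/2} • M^j ∈ BH(m, l)`
    (sound₁ : ∀ j : ℕ, ζ ^ j ∈ X →
      IsButson l (((Real.sqrt m : ℂ) ^ ((1 : ℤ) - (j : ℤ))) • M ^ j))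
    -- soundness condition (2): for `ζ^j ∈ Y`, the entrywise power `H^{(j)} ∈ BH(n, k)`
    (sound₂ : ∀ j : ℕ, ζ ^ j ∈ Y →
      IsButson k (fun a b => H a b ^ j))
    -- a choice of exponents: `H a b = ζ ^ e a b`
    (e : Fin n → Fin n → ℕ) (he : ∀ a b, H a b = ζ ^ e a b) :
    IsButson l (fun p q : Fin n × Fin m =>
      ((((Real.sqrt m : ℂ) ^ ((1 : ℤ) - (e p.1 q.1 : ℤ))) • M ^ (e p.1 q.1)) p.2 q.2)) := by
  classical
  set s : ℂ := (Real.sqrt m : ℂ) with hs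
  have hmpos : (0:ℝ) < m := by exact_mod_cast hm
  have hs_ne : s ≠ 0 := by
    simpa [hs] using Complex.ofReal_ne_zero.mpr (Real.sqrt_pos.mpr hmpos).ne'
  have hs_sq : s * s = (m:ℂ) := by
    rw [hs, ← Complex.ofReal_mul, Real.mul_self_sqrt hmpos.le]; norm_cast
  have hs_conj : (starRingEnd ℂ) s = s := Complex.conj_ofReal _
  set U : Matrix (Fin m) (Fin m) ℂ := s⁻¹ • M with hU
  have hUconj : Uᴴ = s⁻¹ • Mᴴ := by
    rw [hU, Matrix.conjTranspose_smul]
    congr 1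
    rw [star_inv₀, Complex.star_def, hs_conj]
  have hUU : U * Uᴴ = 1 := by
    rw [hU, hUconj, Matrix.smul_mul, Matrix.mul_smul, hM.2, smul_smul, smul_smul,
      Fintype.card_fin]
    have h1 : s⁻¹ * s⁻¹ * (m:ℂ) = 1 := by
      rw [← hs_sq]; field_simp
    rw [h1, one_smul]
  have hUU' : Uᴴ * U = 1 := mul_eq_one_comm.mp hUU
  have hMU : ∀ j : ℕ, M ^ j = s ^ j • U ^ j := by
    intro j
    rw [hU, smul_pow, smul_smul, inv_pow]
    rw [mul_inv_cancel₀ (pow_ne_zero _ hs_ne), one_smul]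
  have hk0 : (k:ℂ) ≠ 0 := Nat.cast_ne_zero.mpr hk.ne'
  have hζk : ζ ^ k = 1 := by
    rw [hζ, ← Complex.exp_nat_mul,
      show (k:ℂ) * (2 * Real.pi * Complex.I / k) = 2 * Real.pi * Complex.I by field_simp]
    exact Complex.exp_two_pi_mul_I
  have hsz : ∀ j : ℕ, s ^ ((1:ℤ) - (j:ℤ)) * s ^ j = s := by
    intro j
    rw [← zpow_natCast s j, ← zpow_add₀ hs_ne]
    norm_num
  have key : ∀ a b : Fin n, a ≠ b → ∑ c : Fin n, U ^ (e a c) * Uᴴ ^ (e b c) = 0 := by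
    intro a b hab
    refine aux_key hm hk U hUU hUU' ζ hζk e a b ?_
    intro z hz
    have hzY : z ∈ Y := hMY hz
    obtain ⟨j, rfl⟩ := hY hzY
    refine ⟨j, rfl, ?_⟩
    have h3 := Matrix.ext_iff.mpr (sound₂ j hzY).2 a b
    erw [Matrix.mul_apply] at h3
    have h4 : ∑ x, H a x ^ j * star (H b x ^ j) =
        ((Fintype.card (Fin n) : ℂ) • (1 : Matrix (Fin n) (Fin n) ℂ)) a b := h3
    simpa [Matrix.mul_apply, Matrix.conjTranspose_apply, Matrix.smul_apply,
      Matrix.one_apply_ne hab, he, Complex.star_def] using h4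
  constructor
  · intro p q
    have hx : ζ ^ (e p.1 q.1) ∈ X := by rw [← he]; exact hHX _ _
    exact (sound₁ _ hx).1 p.2 q.2
  · ext ⟨a, i⟩ ⟨b, j⟩
    erw [Matrix.mul_apply, Fintype.sum_prod_type]
    have hin : ∀ c : Fin n,
        ∑ r : Fin m, (U ^ e a c) i r * star ((U ^ e b c) j r)
          = (U ^ e a c * Uᴴ ^ e b c) i j := by
      intro c
      rw [Matrix.mul_apply, ← Matrix.conjTranspose_pow]
      exact Finset.sum_congr rfl fun r _ => by rw [Matrix.conjTranspose_apply]
    have hstep : ∀ c : Fin n, ∑ r : Fin m,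
        (fun p q : Fin n × Fin m =>
          (((s ^ ((1 : ℤ) - (e p.1 q.1 : ℤ))) • M ^ (e p.1 q.1)) p.2 q.2)) (a, i) (c, r) *
        (fun p q : Fin n × Fin m =>
          (((s ^ ((1 : ℤ) - (e p.1 q.1 : ℤ))) • M ^ (e p.1 q.1)) p.2 q.2))ᴴ (c, r) (b, j)
          = (m : ℂ) * (U ^ e a c * Uᴴ ^ e b c) i j := by
      intro c
      simp only [Matrix.conjTranspose_apply, Matrix.smul_apply, smul_eq_mul]
      rw [← hin c, Finset.mul_sum]
      refine Finset.sum_congr rfl fun r _ => ?_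
      erw [Matrix.conjTranspose_apply]
      beta_reduce
      rw [hMU (e a c), hMU (e b c), Matrix.smul_apply, Matrix.smul_apply, smul_eq_mul,
        smul_eq_mul, star_mul', star_mul', star_zpow₀, star_pow]
      simp only [Complex.star_def, hs_conj]
      rw [show (↑m:ℂ) = (s ^ ((1:ℤ) - (e a c : ℤ)) * s ^ (e a c)) *
          (s ^ ((1:ℤ) - (e b c : ℤ)) * s ^ (e b c)) from by rw [hsz, hsz, hs_sq]]
      ring
    rw [Finset.sum_congr rfl fun c _ => hstep c, ← Finset.mul_sum,
      ← Matrix.sum_apply i j Finset.univ fun c => U ^ e a c * Uᴴ ^ e b c]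
    by_cases hab : a = b
    · subst hab
      have h1 : ∑ c : Fin n, U ^ e a c * Uᴴ ^ e a c = (n : ℂ) • 1 := by
        rw [Finset.sum_congr rfl fun c _ => aux_pow_mul U hUU hUU' (e a c),
          Finset.sum_const, Finset.card_univ, Fintype.card_fin,
          ← Nat.cast_smul_eq_nsmul ℂ]
      rw [h1]
      simp only [Matrix.smul_apply, Matrix.one_apply, Fintype.card_prod, Fintype.card_fin,
        Prod.mk.injEq, true_and, smul_eq_mul, Nat.cast_mul]
      split_ifs <;> ring
    · rw [key a b hab]
      have hne : ((a, i) : Fin n × Fin m) ≠ (b, j) := fun h => hab (congrArg Prod.fst h)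
      simp [Matrix.one_apply_ne hne]
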